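/- Let K be a compact metric group acting continuously on a compact metric space X, and let ρ: K × X → ℝ_{>0} be a cocycle continuous in k for every fixed x, with sup_{k∈K} ρ(k,x) measurable in x. Let ν be a Borel probability measure on X and K' ⊆ K a dense subgroup such that ν ∘ T_k = ρ(k,·)·ν for all k ∈ K'. Then ν ∘ T_k = ρ(k,·)·ν for all k ∈ K. -/

import Mathlib

open MeasureTheory Set

/-- If the Radon–Nikodym identity ν∘T_k = ρ(k,·)·ν holds for all k in a dense subgroup of a
compact metric group acting continuously on a compact metric space, and ρ is continuous in k
with measurable supremum, then the identity holds for all k ∈ K. -/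
theorem stmt16 {K X : Type*} [Group K] [MetricSpace K] [IsTopologicalGroup K]
    [CompactSpace K] [MeasurableSpace K] [BorelSpace K]
    [MetricSpace X] [CompactSpace X] [MeasurableSpace X] [BorelSpace X]
    (T : K → X → X) (hTcont : Continuous fun p : K × X => T p.1 p.2)
    (hT1 : ∀ x, T 1 x = x) (hTmul : ∀ g h x, T (g * h) x = T g (T h x))
    (ρ : K → X → ℝ) (hρmeas : ∀ k, Measurable (ρ k)) (hρpos : ∀ k x, 0 < ρ k x)
    (hρcoc : ∀ g h x, ρ (g * h) x = ρ g (T h x) * ρ h x)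
    (hρcont : ∀ x, Continuous fun k => ρ k x)
    (hsup : Measurable fun x => ⨆ k : K, ρ k x)
    (ν : Measure X) [IsProbabilityMeasure ν]
    (S : Subgroup K) (hSdense : Dense (S : Set K))
    (hS : ∀ k ∈ S, ∀ A : Set X, MeasurableSet A →
      ν (T k '' A) = ∫⁻ x in A, ENNReal.ofReal (ρ k x) ∂ν) :
    ∀ k : K, ∀ A : Set X, MeasurableSet A →
      ν (T k '' A) = ∫⁻ x in A, ENNReal.ofReal (ρ k x) ∂ν := by
  -- basic facts about the action
  have hTkcont : ∀ k, Continuous (T k) := fun k =>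
    hTcont.comp (continuous_const.prodMk continuous_id)
  have hTinv : ∀ k x, T k⁻¹ (T k x) = x := by
    intro k x; rw [← hTmul, inv_mul_cancel, hT1]
  have hTinv' : ∀ k x, T k (T k⁻¹ x) = x := by
    intro k x; have := hTinv k⁻¹ x; rwa [inv_inv] at this
  have himg : ∀ (k : K) (A : Set X), T k '' A = T k⁻¹ ⁻¹' A := by
    intro k A; ext y
    constructor
    · rintro ⟨x, hx, rfl⟩; simpa [mem_preimage, hTinv k x] using hx
    · intro hy; exact ⟨T k⁻¹ y, hy, hTinv' k y⟩
  have hρ1 : ∀ x, ρ 1 x = 1 := by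
    intro x
    have h := hρcoc 1 1 x
    rw [one_mul, hT1] at h
    have := (hρpos 1 x).ne'
    nlinarith [hρpos 1 x]
  have hρinv : ∀ (k : K) (x : X), ρ k (T k⁻¹ x) * ρ k⁻¹ x = 1 := by
    intro k x
    have h := hρcoc k k⁻¹ x
    rw [mul_inv_cancel, hρ1] at h
    linarith
  -- the two families of measures
  set μf : K → Measure X := fun k => ν.map (T k⁻¹) with hμf
  set ηf : K → Measure X := fun k =>
    ν.withDensity (fun x => ENNReal.ofReal (ρ k x)) with hηf
  have hdensmeas : ∀ k : K, Measurable fun x => ENNReal.ofReal (ρ k x) := fun k =>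
    (hρmeas k).ennreal_ofReal
  have hμapp : ∀ (k : K) (A : Set X), MeasurableSet A → μf k A = ν (T k '' A) := by
    intro k A hA
    rw [hμf, Measure.map_apply (hTkcont k⁻¹).measurable hA, himg]
  have hμuniv : ∀ k : K, μf k univ = 1 := by
    intro k
    rw [hμf, Measure.map_apply (hTkcont k⁻¹).measurable MeasurableSet.univ,
      preimage_univ, measure_univ]
  -- for k in S, the two measures coincide
  have hSeq : ∀ k ∈ S, μf k = ηf k := by
    intro k hk
    ext A hA
    rw [hμapp k A hA, hS k hk A hA, hηf, withDensity_apply _ hA]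
  -- key continuity lemma: lintegral inequality for continuous nonneg test functions
  have key0 : ∀ (k : K) (f : X → ℝ), Continuous f → (∀ x, 0 ≤ f x) →
      (∫⁻ x, ENNReal.ofReal (f x) * ENNReal.ofReal (ρ k x) ∂ν) ≤
        ∫⁻ x, ENNReal.ofReal (f (T k⁻¹ x)) ∂ν := by
    intro k f hf hf0
    -- choose a sequence in S tending to k
    obtain ⟨u, hu_mem, hu_tend⟩ := mem_closure_iff_seq_limit.1 (hSdense k)
    -- bound for f
    obtain ⟨C, hC⟩ : ∃ C : ℝ, ∀ x, f x ≤ C := by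
      rcases isEmpty_or_nonempty X with hX | hX
      · exact ⟨0, fun x => (IsEmpty.false x).elim⟩
      · obtain ⟨x₀, -, hx₀⟩ := isCompact_univ.exists_isMaxOn univ_nonempty hf.continuousOn
        exact ⟨f x₀, fun x => hx₀ (mem_univ x)⟩
    have step1 : (∫⁻ x, ENNReal.ofReal (f x) * ENNReal.ofReal (ρ k x) ∂ν) ≤
        Filter.liminf (fun n =>
          ∫⁻ x, ENNReal.ofReal (f x) * ENNReal.ofReal (ρ (u n) x) ∂ν) Filter.atTop := by
      have hpt : ∀ x, Filter.Tendsto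
          (fun n => ENNReal.ofReal (f x) * ENNReal.ofReal (ρ (u n) x)) Filter.atTop
          (nhds (ENNReal.ofReal (f x) * ENNReal.ofReal (ρ k x))) := by
        intro x
        have h1 : Filter.Tendsto (fun n => ρ (u n) x) Filter.atTop (nhds (ρ k x)) :=
          ((hρcont x).tendsto k).comp hu_tend
        have h2 : Filter.Tendsto (fun n => ENNReal.ofReal (ρ (u n) x)) Filter.atTop
            (nhds (ENNReal.ofReal (ρ k x))) :=
          (ENNReal.continuous_ofReal.tendsto _).comp h1
        exact ENNReal.Tendsto.const_mul h2 (Or.inr ENNReal.ofReal_ne_top)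
      calc (∫⁻ x, ENNReal.ofReal (f x) * ENNReal.ofReal (ρ k x) ∂ν)
          = ∫⁻ x, Filter.liminf
              (fun n => ENNReal.ofReal (f x) * ENNReal.ofReal (ρ (u n) x)) Filter.atTop ∂ν := by
            refine lintegral_congr fun x => ?_
            exact ((hpt x).liminf_eq).symm
        _ ≤ _ := lintegral_liminf_le
              (fun n => ((hf.measurable.ennreal_ofReal).mul (hdensmeas (u n))))
    have step2 : ∀ n, (∫⁻ x, ENNReal.ofReal (f x) * ENNReal.ofReal (ρ (u n) x) ∂ν) =
        ∫⁻ x, ENNReal.ofReal (f (T (u n)⁻¹ x)) ∂ν := by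
      intro n
      have hw : (∫⁻ x, ENNReal.ofReal (f x) ∂(ηf (u n))) =
          ∫⁻ x, ENNReal.ofReal (f x) * ENNReal.ofReal (ρ (u n) x) ∂ν := by
        rw [hηf, lintegral_withDensity_eq_lintegral_mul _ (hdensmeas (u n))
          hf.measurable.ennreal_ofReal]
        exact lintegral_congr fun x => by simp [mul_comm]
      rw [← hw, ← hSeq (u n) (hu_mem n), hμf,
        lintegral_map hf.measurable.ennreal_ofReal (hTkcont (u n)⁻¹).measurable]
    have step3 : Filter.Tendsto (fun n => ∫⁻ x, ENNReal.ofReal (f (T (u n)⁻¹ x)) ∂ν)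
        Filter.atTop (nhds (∫⁻ x, ENNReal.ofReal (f (T k⁻¹ x)) ∂ν)) := by
      refine tendsto_lintegral_of_dominated_convergence (fun _ => ENNReal.ofReal C)
        (fun n => (hf.measurable.comp (hTkcont (u n)⁻¹).measurable).ennreal_ofReal)
        (fun n => Filter.Eventually.of_forall fun x =>
          ENNReal.ofReal_le_ofReal (hC _)) ?_ ?_
      · simp [lintegral_const]
      · refine Filter.Eventually.of_forall fun x => ?_
        have h1 : Filter.Tendsto (fun n => (u n)⁻¹) Filter.atTop (nhds k⁻¹) :=
          (continuous_inv.tendsto k).comp hu_tend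
        have h2 : Filter.Tendsto (fun n => T (u n)⁻¹ x) Filter.atTop (nhds (T k⁻¹ x)) :=
          (hTcont.tendsto (k⁻¹, x)).comp (h1.prodMk_nhds tendsto_const_nhds)
        exact (ENNReal.continuous_ofReal.tendsto _).comp ((hf.tendsto _).comp h2)
    calc (∫⁻ x, ENNReal.ofReal (f x) * ENNReal.ofReal (ρ k x) ∂ν)
        ≤ Filter.liminf (fun n =>
            ∫⁻ x, ENNReal.ofReal (f x) * ENNReal.ofReal (ρ (u n) x) ∂ν) Filter.atTop := step1
      _ = Filter.liminf (fun n => ∫⁻ x, ENNReal.ofReal (f (T (u n)⁻¹ x)) ∂ν) Filter.atTop := by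
            simp_rw [step2]
      _ = ∫⁻ x, ENNReal.ofReal (f (T k⁻¹ x)) ∂ν := step3.liminf_eq
  -- restated with the measures
  have key : ∀ (k : K) (f : X → ℝ), Continuous f → (∀ x, 0 ≤ f x) →
      (∫⁻ x, ENNReal.ofReal (f x) ∂(ηf k)) ≤ ∫⁻ x, ENNReal.ofReal (f x) ∂(μf k) := by
    intro k f hf hf0
    have h1 : (∫⁻ x, ENNReal.ofReal (f x) ∂(ηf k)) =
        ∫⁻ x, ENNReal.ofReal (f x) * ENNReal.ofReal (ρ k x) ∂ν := by
      rw [hηf, lintegral_withDensity_eq_lintegral_mul _ (hdensmeas k)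
        hf.measurable.ennreal_ofReal]
      exact lintegral_congr fun x => by simp [mul_comm]
    have h2 : (∫⁻ x, ENNReal.ofReal (f x) ∂(μf k)) =
        ∫⁻ x, ENNReal.ofReal (f (T k⁻¹ x)) ∂ν := by
      rw [hμf, lintegral_map hf.measurable.ennreal_ofReal (hTkcont k⁻¹).measurable]
    rw [h1, h2]; exact key0 k f hf hf0
  -- ηf k is a finite measure
  have hηfin : ∀ k : K, ηf k univ ≤ 1 := by
    intro k
    have := key0 k (fun _ => 1) continuous_const (fun _ => zero_le_one)
    simp only [ENNReal.ofReal_one, one_mul] at this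
    calc ηf k univ = ∫⁻ x, ENNReal.ofReal (ρ k x) ∂ν := by
          rw [hηf, withDensity_apply _ MeasurableSet.univ, Measure.restrict_univ]
      _ ≤ ∫⁻ _, 1 ∂ν := this
      _ = 1 := by simp
  have hηFinite : ∀ k : K, IsFiniteMeasure (ηf k) := by
    intro k
    exact ⟨lt_of_le_of_lt (hηfin k) ENNReal.one_lt_top⟩
  -- measure inequality ηf k ≤ μf k
  have hle : ∀ k : K, ηf k ≤ μf k := by
    intro k
    haveI := hηFinite k
    haveI : IsFiniteMeasure (μf k) := ⟨by rw [hμuniv]; exact ENNReal.one_lt_top⟩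
    -- first on open sets, via Urysohn
    have hopen : ∀ U : Set X, IsOpen U → ηf k U ≤ μf k U := by
      intro U hU
      rw [hU.measure_eq_iSup_isClosed]
      refine iSup₂_le fun F hFU => iSup_le fun hF => ?_
      obtain ⟨f, hf0, hf1, hf01⟩ := exists_continuous_zero_one_of_isClosed
        hU.isClosed_compl hF (disjoint_compl_left.mono_right hFU)
      have hfc : Continuous f := f.continuous
      have hfnn : ∀ x, 0 ≤ (f : X → ℝ) x := fun x => (hf01 x).1
      calc ηf k F = ∫⁻ x, F.indicator 1 x ∂(ηf k) := by
            exact (lintegral_indicator_one hF.measurableSet).symm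
        _ ≤ ∫⁻ x, ENNReal.ofReal (f x) ∂(ηf k) := by
            refine lintegral_mono fun x => ?_
            by_cases hx : x ∈ F
            · simp [hx, hf1 hx]
            · simp [hx]
        _ ≤ ∫⁻ x, ENNReal.ofReal (f x) ∂(μf k) := key k f hfc hfnn
        _ ≤ ∫⁻ x, U.indicator 1 x ∂(μf k) := by
            refine lintegral_mono fun x => ?_
            by_cases hx : x ∈ U
            · simpa [hx] using ENNReal.ofReal_le_one.2 (hf01 x).2
            · have : (f : X → ℝ) x = 0 := hf0 hx
              simp [hx, this]
        _ = μf k U := lintegral_indicator_one hU.measurableSet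
    -- then on all sets, via outer regularity of μf k
    refine Measure.le_iff.2 fun A hA => ?_
    rw [Set.measure_eq_iInf_isOpen A (μf k)]
    refine le_iInf fun U => le_iInf fun hAU => le_iInf fun hU => ?_
    exact le_trans (measure_mono hAU) (hopen U hU)
  -- total mass of ηf k is at least 1, via the cocycle identity
  have hmass : ∀ k : K, ηf k univ = 1 := by
    intro k
    refine le_antisymm (le_trans ((hle k) univ) (hμuniv k).le) ?_
    set g : X → ENNReal := fun y => ENNReal.ofReal (ρ k (T k⁻¹ y)) with hg
    have hgmeas : Measurable g := ((hρmeas k).comp (hTkcont k⁻¹).measurable).ennreal_ofReal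
    have hL : (∫⁻ y, g y ∂(ηf k⁻¹)) = 1 := by
      rw [hηf, lintegral_withDensity_eq_lintegral_mul _ (hdensmeas k⁻¹) hgmeas]
      have hpt : ∀ x, ENNReal.ofReal (ρ k⁻¹ x) * g x = 1 := by
        intro x
        simp only [hg]
        rw [← ENNReal.ofReal_mul (hρpos k⁻¹ x).le, mul_comm (ρ k⁻¹ x), hρinv k x,
          ENNReal.ofReal_one]
      simp only [Pi.mul_apply]
      rw [lintegral_congr hpt]
      simp
    have hR : (∫⁻ y, g y ∂(μf k⁻¹)) = ηf k univ := by
      simp only [hμf, inv_inv]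
      rw [lintegral_map hgmeas (hTkcont k).measurable]
      have : ∀ x, g (T k x) = ENNReal.ofReal (ρ k x) := by
        intro x; simp only [hg]; rw [hTinv k x]
      rw [lintegral_congr this, hηf, withDensity_apply _ MeasurableSet.univ,
        Measure.restrict_univ]
    calc (1 : ENNReal) = ∫⁻ y, g y ∂(ηf k⁻¹) := hL.symm
      _ ≤ ∫⁻ y, g y ∂(μf k⁻¹) := lintegral_mono' (hle k⁻¹) le_rfl
      _ = ηf k univ := hR
  -- conclude: equal measures
  have heq : ∀ k : K, ηf k = μf k := by
    intro k
    haveI := hηFinite k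
    ext A hA
    have h1 : ηf k A ≤ μf k A := (hle k) A
    have h2 : ηf k Aᶜ ≤ μf k Aᶜ := (hle k) Aᶜ
    have h3 : ηf k A + ηf k Aᶜ = μf k A + μf k Aᶜ := by
      rw [measure_add_measure_compl hA, measure_add_measure_compl hA, hmass, hμuniv]
    have hfin : μf k Aᶜ ≠ ⊤ := by
      refine ne_of_lt (lt_of_le_of_lt (measure_mono (subset_univ _)) ?_)
      rw [hμuniv]; exact ENNReal.one_lt_top
    by_contra hne
    have hlt : ηf k A < μf k A := lt_of_le_of_ne h1 hne
    have : ηf k A + ηf k Aᶜ < μf k A + μf k Aᶜ :=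
      WithTop.add_lt_add_of_lt_of_le (ne_of_lt (lt_of_le_of_lt h2 hfin.lt_top)) hlt h2
    exact absurd h3 (ne_of_lt this)
  intro k A hA
  calc ν (T k '' A) = μf k A := (hμapp k A hA).symm
    _ = ηf k A := by rw [heq k]
    _ = ∫⁻ x in A, ENNReal.ofReal (ρ k x) ∂ν := by rw [hηf, withDensity_apply _ hA]
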